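/- Let d ≥ 1, δ > 0, let μ be a finite nonnegative Borel measure on [0,δ], let K ≥ 0 and let b : ℝ^d × ℝ^d → ℝ^d satisfy ‖b(x,y) − b(x̃,ỹ)‖ ≤ K(‖x−x̃‖ + ‖y−ỹ‖) for all x, x̃, y, ỹ ∈ ℝ^d. Then for every continuous φ : [−δ,0] → ℝ^d there exists a continuous function x : [−δ,1] → ℝ^d such that x(t) = φ(t) for all t ∈ [−δ,0] and x(t) = φ(0) + ∫₀^t b(x(s), ∫₀^δ x(s−u) μ(du)) ds for all t ∈ [0,1]. -/

import Mathlib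

open MeasureTheory Set BoundedContinuousFunction Function

noncomputable section DelayODEAux

variable {d : ℕ}

private def delayG (δ : ℝ) (μ : Measure ℝ)
    (b : EuclideanSpace ℝ (Fin d) → EuclideanSpace ℝ (Fin d) → EuclideanSpace ℝ (Fin d))
    (f : ℝ →ᵇ EuclideanSpace ℝ (Fin d)) (s : ℝ) : EuclideanSpace ℝ (Fin d) :=
  b (f s) (∫ u in Icc (0:ℝ) δ, f (s - u) ∂μ)


private lemma delay_contH (δ : ℝ) (μ : Measure ℝ) [IsFiniteMeasure μ]
    (f : ℝ →ᵇ EuclideanSpace ℝ (Fin d)) :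
    Continuous fun s => ∫ u in Icc (0:ℝ) δ, f (s - u) ∂μ := by
  apply continuous_of_dominated (bound := fun _ => ‖f‖)
  · intro s
    exact (f.continuous.comp (continuous_const.sub continuous_id)).aestronglyMeasurable
  · intro s
    exact Filter.Eventually.of_forall fun u => f.norm_coe_le_norm _
  · exact integrable_const _
  · exact Filter.Eventually.of_forall fun u =>
      f.continuous.comp (continuous_id.sub continuous_const)


private lemma delay_contb {K : ℝ} (hK : 0 ≤ K)
    {b : EuclideanSpace ℝ (Fin d) → EuclideanSpace ℝ (Fin d) → EuclideanSpace ℝ (Fin d)}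
    (hb : ∀ x x' y y' : EuclideanSpace ℝ (Fin d),
      ‖b x y - b x' y'‖ ≤ K * (‖x - x'‖ + ‖y - y'‖)) :
    Continuous fun p : EuclideanSpace ℝ (Fin d) × EuclideanSpace ℝ (Fin d) => b p.1 p.2 := by
  have : LipschitzWith (Real.toNNReal (2 * K)) (fun p : EuclideanSpace ℝ (Fin d) × EuclideanSpace ℝ (Fin d) => b p.1 p.2) := by
    apply LipschitzWith.of_dist_le_mul
    intro p q
    rw [dist_eq_norm, Real.coe_toNNReal _ (by positivity)]
    have h1 : ‖p.1 - q.1‖ ≤ dist p q := by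
      rw [← dist_eq_norm, Prod.dist_eq]; exact le_max_left _ _
    have h2 : ‖p.2 - q.2‖ ≤ dist p q := by
      rw [← dist_eq_norm, Prod.dist_eq]; exact le_max_right _ _
    calc ‖b p.1 p.2 - b q.1 q.2‖ ≤ K * (‖p.1 - q.1‖ + ‖p.2 - q.2‖) := hb _ _ _ _
      _ ≤ 2 * K * dist p q := by nlinarith
  exact this.continuous


private lemma delay_intf (δ : ℝ) (μ : Measure ℝ) [IsFiniteMeasure μ]
    (f : ℝ →ᵇ EuclideanSpace ℝ (Fin d)) (s : ℝ) :
    Integrable (fun u => f (s - u)) (μ.restrict (Icc (0:ℝ) δ)) := by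
  have := (f.compContinuous ⟨fun u => s - u, continuous_const.sub continuous_id⟩).integrable
    (μ := μ.restrict (Icc (0:ℝ) δ))
  exact this


private lemma delay_Hdiff (δ : ℝ) (μ : Measure ℝ) [IsFiniteMeasure μ]
    (f g : ℝ →ᵇ EuclideanSpace ℝ (Fin d)) (s : ℝ) (C : ℝ)
    (hfg : ∀ r, r ≤ s → ‖f r - g r‖ ≤ C) :
    ‖(∫ u in Icc (0:ℝ) δ, f (s - u) ∂μ) - ∫ u in Icc (0:ℝ) δ, g (s - u) ∂μ‖
      ≤ (μ (Icc (0:ℝ) δ)).toReal * C := by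
  rw [← integral_sub (delay_intf δ μ f s) (delay_intf δ μ g s)]
  have hae : ∀ᵐ u ∂(μ.restrict (Icc (0:ℝ) δ)), ‖f (s - u) - g (s - u)‖ ≤ C := by
    filter_upwards [ae_restrict_mem measurableSet_Icc] with u hu
    exact hfg (s - u) (by linarith [hu.1])
  calc ‖∫ u in Icc (0:ℝ) δ, (f (s - u) - g (s - u)) ∂μ‖
      ≤ C * ((μ.restrict (Icc (0:ℝ) δ)) univ).toReal :=
        norm_integral_le_of_norm_le_const hae
    _ = (μ (Icc (0:ℝ) δ)).toReal * C := by rw [Measure.restrict_apply_univ, mul_comm]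


private lemma delay_contG (δ : ℝ) (μ : Measure ℝ) [IsFiniteMeasure μ]
    {b : EuclideanSpace ℝ (Fin d) → EuclideanSpace ℝ (Fin d) → EuclideanSpace ℝ (Fin d)}
    (hcb : Continuous fun p : EuclideanSpace ℝ (Fin d) × EuclideanSpace ℝ (Fin d) => b p.1 p.2)
    (f : ℝ →ᵇ EuclideanSpace ℝ (Fin d)) :
    Continuous (delayG δ μ b f) :=
  hcb.comp (f.continuous.prodMk (delay_contH δ μ f))



private def delayTf (δ : ℝ) (μ : Measure ℝ)
    (b : EuclideanSpace ℝ (Fin d) → EuclideanSpace ℝ (Fin d) → EuclideanSpace ℝ (Fin d))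
    (ψ f : ℝ →ᵇ EuclideanSpace ℝ (Fin d)) (t : ℝ) : EuclideanSpace ℝ (Fin d) :=
  ψ (min t 0) + ∫ s in (0:ℝ)..(max 0 (min t 1)), delayG δ μ b f s

private lemma delay_contTf (δ : ℝ) (μ : Measure ℝ) [IsFiniteMeasure μ]
    {b : EuclideanSpace ℝ (Fin d) → EuclideanSpace ℝ (Fin d) → EuclideanSpace ℝ (Fin d)}
    (hcb : Continuous fun p : EuclideanSpace ℝ (Fin d) × EuclideanSpace ℝ (Fin d) => b p.1 p.2)
    (ψ f : ℝ →ᵇ EuclideanSpace ℝ (Fin d)) :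
    Continuous (delayTf δ μ b ψ f) := by
  have hprim : Continuous fun r : ℝ => ∫ s in (0:ℝ)..r, delayG δ μ b f s :=
    intervalIntegral.continuous_primitive
      (fun a c => (delay_contG δ μ hcb f).intervalIntegrable a c) 0
  exact (ψ.continuous.comp (continuous_id.min continuous_const)).add
    (hprim.comp (continuous_const.max (continuous_id.min continuous_const)))


private lemma delay_boundTf (δ : ℝ) (μ : Measure ℝ) [IsFiniteMeasure μ]
    {b : EuclideanSpace ℝ (Fin d) → EuclideanSpace ℝ (Fin d) → EuclideanSpace ℝ (Fin d)}
    (hcb : Continuous fun p : EuclideanSpace ℝ (Fin d) × EuclideanSpace ℝ (Fin d) => b p.1 p.2)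
    (ψ f : ℝ →ᵇ EuclideanSpace ℝ (Fin d)) :
    ∃ C, ∀ t, ‖delayTf δ μ b ψ f t‖ ≤ C := by
  have hprim : Continuous fun r : ℝ => ∫ s in (0:ℝ)..r, delayG δ μ b f s :=
    intervalIntegral.continuous_primitive
      (fun a c => (delay_contG δ μ hcb f).intervalIntegrable a c) 0
  obtain ⟨C, hC⟩ := (isCompact_Icc (a := (0:ℝ)) (b := 1)).exists_bound_of_continuousOn
    hprim.continuousOn
  refine ⟨‖ψ‖ + C, fun t => (norm_add_le _ _).trans (add_le_add (ψ.norm_coe_le_norm _) ?_)⟩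
  exact hC _ ⟨le_max_left _ _, max_le zero_le_one (min_le_right _ _)⟩



private def delayTB (δ : ℝ) (μ : Measure ℝ) [IsFiniteMeasure μ]
    {b : EuclideanSpace ℝ (Fin d) → EuclideanSpace ℝ (Fin d) → EuclideanSpace ℝ (Fin d)}
    (hcb : Continuous fun p : EuclideanSpace ℝ (Fin d) × EuclideanSpace ℝ (Fin d) => b p.1 p.2)
    (ψ f : ℝ →ᵇ EuclideanSpace ℝ (Fin d)) : ℝ →ᵇ EuclideanSpace ℝ (Fin d) :=
  ofNormedAddCommGroup (delayTf δ μ b ψ f) (delay_contTf δ μ hcb ψ f)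
    (delay_boundTf δ μ hcb ψ f).choose (delay_boundTf δ μ hcb ψ f).choose_spec

private lemma delayTB_apply (δ : ℝ) (μ : Measure ℝ) [IsFiniteMeasure μ]
    {b : EuclideanSpace ℝ (Fin d) → EuclideanSpace ℝ (Fin d) → EuclideanSpace ℝ (Fin d)}
    (hcb : Continuous fun p : EuclideanSpace ℝ (Fin d) × EuclideanSpace ℝ (Fin d) => b p.1 p.2)
    (ψ f : ℝ →ᵇ EuclideanSpace ℝ (Fin d)) (t : ℝ) :
    delayTB δ μ hcb ψ f t = delayTf δ μ b ψ f t := rfl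


private lemma delay_Tbdry (δ : ℝ) (μ : Measure ℝ)
    (b : EuclideanSpace ℝ (Fin d) → EuclideanSpace ℝ (Fin d) → EuclideanSpace ℝ (Fin d))
    (ψ f : ℝ →ᵇ EuclideanSpace ℝ (Fin d)) (t : ℝ) (ht : t ≤ 0) :
    delayTf δ μ b ψ f t = ψ t := by
  unfold delayTf
  rw [min_eq_left ht, min_eq_left (ht.trans zero_le_one), max_eq_left ht,
    intervalIntegral.integral_same, add_zero]


private lemma delay_Gdiff (δ : ℝ) (μ : Measure ℝ) [IsFiniteMeasure μ]
    (K : ℝ) (hK : 0 ≤ K)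
    {b : EuclideanSpace ℝ (Fin d) → EuclideanSpace ℝ (Fin d) → EuclideanSpace ℝ (Fin d)}
    (hb : ∀ x x' y y' : EuclideanSpace ℝ (Fin d),
      ‖b x y - b x' y'‖ ≤ K * (‖x - x'‖ + ‖y - y'‖))
    (f g : ℝ →ᵇ EuclideanSpace ℝ (Fin d)) (s : ℝ) (C : ℝ) (hC : 0 ≤ C)
    (hfg : ∀ r, r ≤ s → ‖f r - g r‖ ≤ C) :
    ‖delayG δ μ b f s - delayG δ μ b g s‖
      ≤ K * (1 + (μ (Icc (0:ℝ) δ)).toReal) * C := by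
  have h2 := delay_Hdiff δ μ f g s C hfg
  have h3 := hfg s le_rfl
  have hM0 : (0:ℝ) ≤ (μ (Icc (0:ℝ) δ)).toReal := ENNReal.toReal_nonneg
  calc ‖delayG δ μ b f s - delayG δ μ b g s‖
      ≤ K * (‖f s - g s‖ + ‖(∫ u in Icc (0:ℝ) δ, f (s - u) ∂μ)
          - ∫ u in Icc (0:ℝ) δ, g (s - u) ∂μ‖) := hb _ _ _ _
    _ ≤ K * (C + (μ (Icc (0:ℝ) δ)).toReal * C) := by
        have := norm_nonneg (f s - g s)
        nlinarith
    _ = K * (1 + (μ (Icc (0:ℝ) δ)).toReal) * C := by ring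


private lemma delay_key (δ : ℝ) (μ : Measure ℝ) [IsFiniteMeasure μ]
    (K : ℝ) (hK : 0 ≤ K)
    {b : EuclideanSpace ℝ (Fin d) → EuclideanSpace ℝ (Fin d) → EuclideanSpace ℝ (Fin d)}
    (hb : ∀ x x' y y' : EuclideanSpace ℝ (Fin d),
      ‖b x y - b x' y'‖ ≤ K * (‖x - x'‖ + ‖y - y'‖))
    (hcb : Continuous fun p : EuclideanSpace ℝ (Fin d) × EuclideanSpace ℝ (Fin d) => b p.1 p.2)
    (ψ : ℝ →ᵇ EuclideanSpace ℝ (Fin d))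
    (T : {f : ℝ →ᵇ EuclideanSpace ℝ (Fin d) // ∀ t : ℝ, t ≤ 0 → f t = ψ t} →
         {f : ℝ →ᵇ EuclideanSpace ℝ (Fin d) // ∀ t : ℝ, t ≤ 0 → f t = ψ t})
    (hT : ∀ f t, (T f).1 t = delayTf δ μ b ψ f.1 t)
    (n : ℕ) (f g : {f : ℝ →ᵇ EuclideanSpace ℝ (Fin d) // ∀ t : ℝ, t ≤ 0 → f t = ψ t}) (t : ℝ) :
    ‖(T^[n] f).1 t - (T^[n] g).1 t‖
      ≤ (K * (1 + (μ (Icc (0:ℝ) δ)).toReal)) ^ n * (max 0 (min t 1)) ^ n / n.factorial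
          * dist f.1 g.1 := by
  set M : ℝ := (μ (Icc (0:ℝ) δ)).toReal with hMdef
  have hM0 : 0 ≤ M := ENNReal.toReal_nonneg
  set L : ℝ := K * (1 + M) with hLdef
  have hL0 : 0 ≤ L := by positivity
  set q : ℝ → ℝ := fun t => max 0 (min t 1) with hqdef
  have hq0 : ∀ t, 0 ≤ q t := fun t => le_max_left _ _
  have hq1 : ∀ t, q t ≤ 1 := fun t => max_le zero_le_one (min_le_right _ _)
  have hqmono : Monotone q := fun a c hac => max_le_max le_rfl (min_le_min hac le_rfl)
  have hq_of : ∀ t : ℝ, 0 ≤ t → t ≤ 1 → q t = t := by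
    intro t h0 h1
    show max 0 (min t 1) = t
    rw [min_eq_left h1, max_eq_right h0]
  set D := dist f.1 g.1 with hD
  have hD0 : 0 ≤ D := dist_nonneg
  induction n generalizing t with
  | zero =>
    simp only [Function.iterate_zero, id_eq, pow_zero, Nat.factorial_zero, Nat.cast_one,
      one_mul, div_one]
    rw [← dist_eq_norm]
    exact dist_coe_le_dist t
  | succ n ih =>
    have hFt : (T^[n+1] f).1 t = delayTf δ μ b ψ (T^[n] f).1 t := by
      rw [iterate_succ_apply', hT]
    have hGt : (T^[n+1] g).1 t = delayTf δ μ b ψ (T^[n] g).1 t := by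
      rw [iterate_succ_apply', hT]
    rw [hFt, hGt]
    set F := (T^[n] f).1 with hF
    set Gg := (T^[n] g).1 with hGg
    have hsub : delayTf δ μ b ψ F t - delayTf δ μ b ψ Gg t
        = ∫ s in (0:ℝ)..(q t), (delayG δ μ b F s - delayG δ μ b Gg s) := by
      show (ψ (min t 0) + ∫ s in (0:ℝ)..(q t), delayG δ μ b F s)
          - (ψ (min t 0) + ∫ s in (0:ℝ)..(q t), delayG δ μ b Gg s) = _
      rw [add_sub_add_left_eq_sub,
        ← intervalIntegral.integral_sub ((delay_contG δ μ hcb F).intervalIntegrable _ _)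
          ((delay_contG δ μ hcb Gg).intervalIntegrable _ _)]
    rw [hsub]
    have hbnd : ∀ᵐ s ∂(volume.restrict (Set.uIoc (0:ℝ) (q t))),
        ‖delayG δ μ b F s - delayG δ μ b Gg s‖
          ≤ L ^ (n+1) * s ^ n / n.factorial * D := by
      filter_upwards [ae_restrict_mem measurableSet_uIoc] with s hs
      have hs' : s ∈ Ioc (0:ℝ) (q t) := by
        rwa [uIoc_of_le (hq0 t)] at hs
      have hqs : q s = s := hq_of s hs'.1.le (hs'.2.trans (hq1 t))
      have hC0 : (0:ℝ) ≤ L ^ n * q s ^ n / n.factorial * D := by positivity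
      have hmaj : ∀ r, r ≤ s → ‖F r - Gg r‖ ≤ L ^ n * q s ^ n / n.factorial * D := by
        intro r hr
        refine (ih r).trans ?_
        have hpow : q r ^ n ≤ q s ^ n := pow_le_pow_left₀ (hq0 r) (hqmono hr) n
        have hfac : (0:ℝ) < (n.factorial : ℝ) := by exact_mod_cast Nat.factorial_pos n
        have h1 : L ^ n * q r ^ n ≤ L ^ n * q s ^ n :=
          mul_le_mul_of_nonneg_left hpow (by positivity)
        have h2 : L ^ n * q r ^ n / n.factorial ≤ L ^ n * q s ^ n / n.factorial :=
          div_le_div_of_nonneg_right h1 hfac.le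
        exact mul_le_mul_of_nonneg_right h2 hD0
      calc ‖delayG δ μ b F s - delayG δ μ b Gg s‖
          ≤ L * (L ^ n * q s ^ n / n.factorial * D) :=
            delay_Gdiff δ μ K hK hb F Gg s _ hC0 hmaj
        _ = L ^ (n+1) * s ^ n / n.factorial * D := by rw [hqs]; ring
    have hint : IntervalIntegrable (fun s => L ^ (n+1) * s ^ n / n.factorial * D)
        volume 0 (q t) :=
      (((continuous_const.mul (continuous_pow n)).div_const _).mul continuous_const).intervalIntegrable _ _
    calc ‖∫ s in (0:ℝ)..(q t), (delayG δ μ b F s - delayG δ μ b Gg s)‖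
        ≤ |∫ s in (0:ℝ)..(q t), L ^ (n+1) * s ^ n / n.factorial * D| :=
          intervalIntegral.norm_integral_le_abs_of_norm_le hbnd hint
      _ = L ^ (n+1) * q t ^ (n+1) / (n+1).factorial * D := by
          have hfun : (fun s : ℝ => L ^ (n+1) * s ^ n / n.factorial * D)
              = fun s : ℝ => (L ^ (n+1) * D / n.factorial) * s ^ n := by
            funext s; ring
          have hqt0 : (0:ℝ) ≤ q t := hq0 t
          rw [hfun, intervalIntegral.integral_const_mul, integral_pow,
            zero_pow n.succ_ne_zero, sub_zero,
            abs_of_nonneg (mul_nonneg (by positivity)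
              (div_nonneg (pow_nonneg hqt0 _) (by positivity))), Nat.factorial_succ]
          have hfac : ((n.factorial : ℝ)) ≠ 0 := by
            exact_mod_cast (Nat.factorial_pos n).ne'
          have hn1 : ((n:ℝ) + 1) ≠ 0 := by positivity
          push_cast
          field_simp


end DelayODEAux

set_option maxHeartbeats 1000000 in
/-- Existence of a solution to the delay ordinary differential equation
`x(t) = φ(0) + ∫₀ᵗ b(x(s), ∫₀^δ x(s-u) μ(du)) ds` with initial path `φ` on `[-δ,0]`,
for a Lipschitz drift `b` and a finite delay measure `μ` on `[0,δ]`. -/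
theorem delay_ode_exists
    (d : ℕ) (hd : 1 ≤ d) (δ : ℝ) (hδ : 0 < δ)
    (μ : Measure ℝ) [IsFiniteMeasure μ]
    (K : ℝ) (hK : 0 ≤ K)
    (b : EuclideanSpace ℝ (Fin d) → EuclideanSpace ℝ (Fin d) → EuclideanSpace ℝ (Fin d))
    (hb : ∀ x x' y y' : EuclideanSpace ℝ (Fin d),
      ‖b x y - b x' y'‖ ≤ K * (‖x - x'‖ + ‖y - y'‖))
    (φ : ℝ → EuclideanSpace ℝ (Fin d)) (hφ : ContinuousOn φ (Icc (-δ) 0)) :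
    ∃ x : ℝ → EuclideanSpace ℝ (Fin d),
      ContinuousOn x (Icc (-δ) 1) ∧
      (∀ t ∈ Icc (-δ) (0:ℝ), x t = φ t) ∧
      (∀ t ∈ Icc (0:ℝ) 1,
        x t = φ 0 + ∫ s in (0:ℝ)..t, b (x s) (∫ u in Icc (0:ℝ) δ, x (s - u) ∂μ)) := by
  classical
  have hδ0 : (-δ : ℝ) ≤ 0 := by linarith
  -- the (bounded continuous) extension of the initial path
  let φc : C(Icc (-δ) (0:ℝ), EuclideanSpace ℝ (Fin d)) :=
    ⟨fun p => φ p, continuousOn_iff_continuous_restrict.mp hφ⟩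
  let ψ : ℝ →ᵇ EuclideanSpace ℝ (Fin d) := (mkOfCompact φc).compContinuous
    ⟨projIcc (-δ) 0 hδ0, continuous_projIcc⟩
  have hψ : ∀ t ∈ Icc (-δ) (0:ℝ), ψ t = φ t := by
    intro t ht
    show φ ((projIcc (-δ) 0 hδ0 t : Icc (-δ) (0:ℝ)) : ℝ) = φ t
    rw [projIcc_of_mem hδ0 ht]
  have hcb := delay_contb hK hb
  set M : ℝ := (μ (Icc (0:ℝ) δ)).toReal with hMdef
  have hM0 : 0 ≤ M := ENNReal.toReal_nonneg
  set L : ℝ := K * (1 + M) with hLdef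
  have hL0 : 0 ≤ L := by positivity
  -- the complete space of candidate paths
  let Xs : Set (ℝ →ᵇ EuclideanSpace ℝ (Fin d)) := {f | ∀ t : ℝ, t ≤ 0 → f t = ψ t}
  haveI : Nonempty Xs := ⟨⟨ψ, fun t _ => rfl⟩⟩
  haveI : CompleteSpace Xs := by
    refine IsClosed.completeSpace_coe (hs := ?_)
    have hXs : Xs = ⋂ (t : ℝ) (_ : t ∈ Iic (0:ℝ)), {f : ℝ →ᵇ EuclideanSpace ℝ (Fin d) | f t = ψ t} := by
      ext f
      simp only [Xs, mem_setOf_eq, mem_iInter, mem_Iic]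
    rw [hXs]
    exact isClosed_biInter fun t _ =>
      isClosed_eq (continuous_eval_const t) continuous_const
  let T : Xs → Xs := fun f => ⟨delayTB δ μ hcb ψ f.1, fun t ht => by
    rw [delayTB_apply, delay_Tbdry δ μ b ψ f.1 t ht]⟩
  have hT : ∀ (f : Xs) (t : ℝ), (T f).1 t = delayTf δ μ b ψ f.1 t :=
    fun f t => delayTB_apply δ μ hcb ψ f.1 t
  -- choose a contracting iterate
  obtain ⟨n, hn⟩ : ∃ n : ℕ, L ^ n / n.factorial < 1 := by
    have h := FloorSemiring.tendsto_pow_div_factorial_atTop (K := ℝ) L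
    have h2 : ∀ᶠ n : ℕ in Filter.atTop, L ^ n / n.factorial < 1 :=
      h.eventually (gt_mem_nhds one_pos)
    exact h2.exists
  set c : NNReal := Real.toNNReal (L ^ n / n.factorial) with hc
  have hcoe : (c : ℝ) = L ^ n / n.factorial :=
    Real.coe_toNNReal _ (by positivity)
  have hc1 : c < 1 := by
    rw [← NNReal.coe_lt_coe, hcoe, NNReal.coe_one]
    exact hn
  have hcontract : ContractingWith c (T^[n]) := by
    refine ⟨hc1, LipschitzWith.of_dist_le_mul fun f g => ?_⟩
    have hdd : dist (T^[n] f) (T^[n] g) = dist (T^[n] f).1 (T^[n] g).1 := rfl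
    have hdd2 : dist f g = dist f.1 g.1 := rfl
    rw [hdd, hdd2]
    rw [BoundedContinuousFunction.dist_le (by positivity)]
    intro t
    rw [dist_eq_norm]
    refine (delay_key δ μ K hK hb hcb ψ T hT n f g t).trans ?_
    rw [hcoe]
    have hq0 : (0:ℝ) ≤ max 0 (min t 1) := le_max_left _ _
    have hq1 : max 0 (min t 1) ≤ 1 := max_le zero_le_one (min_le_right _ _)
    have hqpow : (max 0 (min t 1)) ^ n ≤ 1 := pow_le_one₀ hq0 hq1
    have hfac : (0:ℝ) < (n.factorial : ℝ) := by exact_mod_cast Nat.factorial_pos n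
    have : L ^ n * (max 0 (min t 1)) ^ n / n.factorial ≤ L ^ n / n.factorial := by
      apply div_le_div_of_nonneg_right _ hfac.le
      nlinarith [pow_nonneg hL0 n]
    calc L ^ n * (max 0 (min t 1)) ^ n / n.factorial * dist f.1 g.1
        ≤ L ^ n / n.factorial * dist f.1 g.1 :=
          mul_le_mul_of_nonneg_right this dist_nonneg
      _ = L ^ n / n.factorial * dist f.1 g.1 := rfl
  -- the fixed point
  set y : Xs := hcontract.fixedPoint (T^[n]) with hy
  have hTy : T y = y := hcontract.isFixedPt_fixedPoint_iterate
  have hyeq : ∀ t : ℝ, y.1 t = delayTf δ μ b ψ y.1 t := by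
    intro t
    conv_lhs => rw [← hTy]
    exact hT y t
  refine ⟨fun t => y.1 t, y.1.continuous.continuousOn, ?_, ?_⟩
  · intro t ht
    show y.1 t = φ t
    rw [y.2 t ht.2]
    exact hψ t ht
  · intro t ht
    show y.1 t = _
    rw [hyeq t]
    show ψ (min t 0) + ∫ s in (0:ℝ)..(max 0 (min t 1)), delayG δ μ b y.1 s = _
    rw [min_eq_right ht.1, min_eq_left ht.2, max_eq_right ht.1,
      hψ 0 ⟨hδ0, le_rfl⟩]
    rfl
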